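/- Let E be a 2n-dimensional complex symplectic vector space with symplectic form σ, and let Sym^2 E act on E by (e₁e₂)•e = σ(e₁,e)e₂ + σ(e₂,e)e₁, extended as a derivation to Sym^l E. Then the quadratic Casimir element q(R^E) = (1/4)Σ_{μν} (de_μ^♭ de_ν^♭)•(e_μ e_ν)• (summed over a pair of dual bases) acts on Sym^l E as scalar multiplication by -l(n + l/2). -/

import Mathlib

open MvPolynomial


-- Euler identity, monomial version
lemma euler_monomial {σ : Type*} [Fintype σ] [DecidableEq σ] (d : σ →₀ ℕ) (a : ℂ) :
    ∑ i, X i * pderiv i (monomial d a) = ((d.sum fun _ e => e : ℕ) : ℂ) • monomial d a := by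
  have h1 : ∀ i : σ, X i * pderiv i (monomial d a) = ((d i : ℂ)) • monomial d a := by
    intro i
    rw [pderiv_monomial]
    rcases Nat.eq_zero_or_pos (d i) with h | h
    · simp [h]
    · have hd : Finsupp.single i 1 + (d - Finsupp.single i 1) = d := by
        ext j
        by_cases hj : j = i
        · subst hj; simp [Finsupp.single_apply]; omega
        · simp [Finsupp.single_apply, Ne.symm hj, hj]
      rw [X, monomial_mul, one_mul, hd, smul_monomial]
      rw [smul_eq_mul, mul_comm]
  rw [Finset.sum_congr rfl fun i _ => h1 i, ← Finset.sum_smul]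
  congr 1
  push_cast
  rw [Finsupp.sum]
  rw [Finset.sum_subset (Finset.subset_univ d.support)]
  intro x _ hx
  simp [Finsupp.notMem_support_iff.mp hx]

lemma euler {σ : Type*} [Fintype σ] [DecidableEq σ] {l : ℕ} {p : MvPolynomial σ ℂ}
    (hp : p.IsHomogeneous l) : ∑ i, X i * pderiv i p = (l : ℂ) • p := by
  conv_lhs => rw [← p.support_sum_monomial_coeff]
  conv_rhs => rw [← p.support_sum_monomial_coeff]
  simp only [map_sum, Finset.mul_sum, Finset.smul_sum]
  rw [Finset.sum_comm]
  refine Finset.sum_congr rfl fun d hd => ?_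
  rw [euler_monomial]
  congr 2
  have hc : coeff d p ≠ 0 := (mem_support_iff.mp hd)
  have := hp hc
  simpa [Finsupp.weight_apply, Finsupp.sum, Finsupp.degree] using this

lemma double_euler {σ : Type*} [Fintype σ] [DecidableEq σ] {l : ℕ} {p : MvPolynomial σ ℂ}
    (hp : p.IsHomogeneous l) :
    ∑ i, ∑ j, X i * (X j * pderiv i (pderiv j p)) = ((l : ℂ) ^ 2 - l) • p := by
  have hA : ∑ i, X i * pderiv i (∑ j, X j * pderiv j p) = ((l : ℂ) ^ 2) • p := by
    rw [euler hp, smul_eq_C_mul]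
    have : ∀ i : σ, X i * pderiv i (C (l:ℂ) * p) = C (l:ℂ) * (X i * pderiv i p) := by
      intro i; rw [pderiv_C_mul]; ring
    rw [Finset.sum_congr rfl fun i _ => this i, ← Finset.mul_sum, euler hp, smul_eq_C_mul,
      ← mul_assoc, ← map_mul, ← smul_eq_C_mul, sq]
  have hB : ∀ i : σ, X i * pderiv i (∑ j, X j * pderiv j p)
      = X i * pderiv i p + ∑ j, X i * (X j * pderiv i (pderiv j p)) := by
    intro i
    rw [map_sum, Finset.mul_sum]
    have : ∀ j : σ, X i * pderiv i (X j * pderiv j p)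
        = (if j = i then X i * pderiv i p else 0) + X i * (X j * pderiv i (pderiv j p)) := by
      intro j
      rw [pderiv_mul, mul_add]
      congr 1
      by_cases h : j = i
      · subst h; simp [pderiv_X_self]
      · simp [pderiv_X_of_ne h, h]
    rw [Finset.sum_congr rfl fun j _ => this j, Finset.sum_add_distrib, Finset.sum_ite_eq' Finset.univ i, if_pos (Finset.mem_univ i)]
  have h2 : ∑ i, X i * pderiv i (∑ j, X j * pderiv j p)
      = (l : ℂ) • p + ∑ i, ∑ j, X i * (X j * pderiv i (pderiv j p)) := by
    rw [Finset.sum_congr rfl fun i _ => hB i, Finset.sum_add_distrib, euler hp]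
  rw [hA] at h2
  rw [sub_smul]
  exact eq_sub_of_add_eq' h2.symm



/-- Index set for a symplectic basis of `ℂ^{2n}`. -/
abbrev SymplIdx (n : ℕ) := Fin n ⊕ Fin n

/-- The matrix of the standard symplectic form `σ` on `ℂ^{2n}`:
`σ(e_μ, e_ν) = Jmat n μ ν`. -/
noncomputable def Jmat (n : ℕ) : SymplIdx n → SymplIdx n → ℂ
  | Sum.inl i, Sum.inr j => if i = j then -1 else 0
  | Sum.inr i, Sum.inl j => if i = j then 1 else 0
  | _, _ => 0

/-- The coordinates of the functional `v^♯ = σ(v, ·)` in the dual basis. -/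
noncomputable def sharp (n : ℕ) (v : SymplIdx n → ℂ) : SymplIdx n → ℂ :=
  fun ν => ∑ μ, v μ * Jmat n μ ν

/-- Contraction with a linear functional (given by its values `f ν` on the basis
vectors), acting as a derivation on the symmetric algebra
`Sym E = ℂ[X_ν : ν]`. -/
noncomputable def contractOp (n : ℕ) (f : SymplIdx n → ℂ) :
    MvPolynomial (SymplIdx n) ℂ →ₗ[ℂ] MvPolynomial (SymplIdx n) ℂ :=
  ∑ ν, f ν • (pderiv ν).toLinearMap

/-- Multiplication by the vector `v = Σ v_μ e_μ` on the symmetric algebra. -/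
noncomputable def mulOp (n : ℕ) (v : SymplIdx n → ℂ) :
    MvPolynomial (SymplIdx n) ℂ →ₗ[ℂ] MvPolynomial (SymplIdx n) ℂ :=
  LinearMap.mulLeft ℂ (∑ μ, v μ • (X μ : MvPolynomial (SymplIdx n) ℂ))

/-- The action of `v·w ∈ Sym²E ≅ sp(n)` on the symmetric algebra:
`(vw)• = w·(v^♯⌟) + v·(w^♯⌟)`. -/
noncomputable def actOp (n : ℕ) (v w : SymplIdx n → ℂ) :
    MvPolynomial (SymplIdx n) ℂ →ₗ[ℂ] MvPolynomial (SymplIdx n) ℂ :=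
  mulOp n w ∘ₗ contractOp n (sharp n v) + mulOp n v ∘ₗ contractOp n (sharp n w)

/-- The vector `de_μ^♭`, i.e. the vector whose `σ`-pairing with `e_ν` is `δ_{μν}`. -/
noncomputable def flatVec (n : ℕ) (μ : SymplIdx n) : SymplIdx n → ℂ :=
  fun ρ => Jmat n ρ μ

/-- The quadratic Casimir element
`q(R^E) = (1/4) Σ_{μν} (de_μ^♭ de_ν^♭)•(e_μ e_ν)•` acting on the symmetric
algebra of `E = ℂ^{2n}`. -/
noncomputable def qRE (n : ℕ) :
    MvPolynomial (SymplIdx n) ℂ →ₗ[ℂ] MvPolynomial (SymplIdx n) ℂ :=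
  (1 / 4 : ℂ) • ∑ μ, ∑ ν,
    (actOp n (flatVec n μ) (flatVec n ν)) ∘ₗ (actOp n (Pi.single μ 1) (Pi.single ν 1))


noncomputable def eps {n : ℕ} : SymplIdx n → ℂ := Sum.elim (fun _ => -1) (fun _ => 1)

lemma eps_swap {n : ℕ} (μ : SymplIdx n) : eps μ.swap = -eps μ := by
  cases μ <;> simp [eps, Sum.swap]

lemma eps_sq {n : ℕ} (μ : SymplIdx n) : eps μ * eps μ = 1 := by
  cases μ <;> simp [eps]

lemma swap_swap {n : ℕ} (μ : SymplIdx n) : μ.swap.swap = μ := Sum.swap_swap μ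

lemma Jmat_eq (n : ℕ) (μ ν : SymplIdx n) :
    Jmat n μ ν = if ν = μ.swap then eps μ else 0 := by
  cases μ <;> cases ν <;> simp [Jmat, Sum.swap, eps, eq_comm]

-- ### application lemmas
lemma contractOp_apply (n : ℕ) (f : SymplIdx n → ℂ) (p : MvPolynomial (SymplIdx n) ℂ) :
    contractOp n f p = ∑ ν, f ν • pderiv ν p := by
  simp [contractOp]

lemma mulOp_apply (n : ℕ) (v : SymplIdx n → ℂ) (p : MvPolynomial (SymplIdx n) ℂ) :
    mulOp n v p = (∑ μ, v μ • (X μ : MvPolynomial (SymplIdx n) ℂ)) * p := by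
  simp [mulOp]

lemma sharp_single (n : ℕ) (μ ν : SymplIdx n) :
    sharp n (Pi.single μ 1) ν = Jmat n μ ν := by
  simp [sharp, Pi.single_apply]

lemma sharp_flat (n : ℕ) (μ ν : SymplIdx n) :
    sharp n (flatVec n μ) ν = if ν = μ then 1 else 0 := by
  simp only [sharp, flatVec, Jmat_eq]
  rw [Finset.sum_congr rfl (fun ρ _ => ?_), Finset.sum_ite_eq' Finset.univ μ.swap
    (fun ρ => eps ρ * if ν = ρ.swap then eps ρ else 0)]
  · simp only [Finset.mem_univ, if_true, swap_swap, eps_swap]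
    by_cases h : ν = μ <;> simp [h, neg_mul_neg, eps_sq]
  · show (if μ = ρ.swap then eps ρ else 0) * (if ν = ρ.swap then eps ρ else 0)
      = if ρ = μ.swap then eps ρ * if ν = ρ.swap then eps ρ else 0 else 0
    have : μ = ρ.swap ↔ ρ = μ.swap := by
      constructor <;> (rintro rfl; rw [swap_swap])
    simp only [this]
    split_ifs <;> ring

lemma single_mulvec (n : ℕ) (μ : SymplIdx n) :
    (∑ ρ, (Pi.single μ 1 : SymplIdx n → ℂ) ρ • (X ρ : MvPolynomial (SymplIdx n) ℂ)) = X μ := by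
  rw [Finset.sum_eq_single μ]
  · simp
  · intro b _ hb; simp [Pi.single_eq_of_ne hb]
  · simp

lemma flat_mulvec (n : ℕ) (μ : SymplIdx n) :
    (∑ ρ, flatVec n μ ρ • (X ρ : MvPolynomial (SymplIdx n) ℂ)) = (-eps μ) • X μ.swap := by
  simp only [flatVec, Jmat_eq]
  rw [Finset.sum_congr rfl (fun ρ _ => ?_), Finset.sum_ite_eq' Finset.univ μ.swap
    (fun ρ => eps ρ • (X ρ : MvPolynomial (SymplIdx n) ℂ))]
  · simp [eps_swap]
  · show (if μ = ρ.swap then eps ρ else 0) • (X ρ : MvPolynomial (SymplIdx n) ℂ)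
      = if ρ = μ.swap then eps ρ • X ρ else 0
    have : μ = ρ.swap ↔ ρ = μ.swap := by
      constructor <;> (rintro rfl; rw [swap_swap])
    simp only [this]
    split_ifs <;> simp

lemma contract_sharp_single (n : ℕ) (μ : SymplIdx n) (p : MvPolynomial (SymplIdx n) ℂ) :
    contractOp n (sharp n (Pi.single μ 1)) p = eps μ • pderiv μ.swap p := by
  rw [contractOp_apply]
  simp only [sharp_single, Jmat_eq]
  rw [Finset.sum_congr rfl (fun ν _ => by rw [ite_smul, zero_smul]),
    Finset.sum_ite_eq' Finset.univ μ.swap (fun ν => eps μ • pderiv ν p)]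
  simp

lemma contract_sharp_flat (n : ℕ) (μ : SymplIdx n) (p : MvPolynomial (SymplIdx n) ℂ) :
    contractOp n (sharp n (flatVec n μ)) p = pderiv μ p := by
  rw [contractOp_apply]
  simp only [sharp_flat]
  rw [Finset.sum_congr rfl (fun ν _ => by rw [ite_smul, zero_smul, one_smul]),
    Finset.sum_ite_eq' Finset.univ μ (fun ν => pderiv ν p)]
  simp

lemma actE_apply (n : ℕ) (μ ν : SymplIdx n) (p : MvPolynomial (SymplIdx n) ℂ) :
    actOp n (Pi.single μ 1) (Pi.single ν 1) p
      = eps μ • (X ν * pderiv μ.swap p) + eps ν • (X μ * pderiv ν.swap p) := by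
  simp only [actOp, LinearMap.add_apply, LinearMap.comp_apply, mulOp_apply, single_mulvec,
    contract_sharp_single, mul_smul_comm]

lemma actF_apply (n : ℕ) (μ ν : SymplIdx n) (p : MvPolynomial (SymplIdx n) ℂ) :
    actOp n (flatVec n μ) (flatVec n ν) p
      = (-eps ν) • (X ν.swap * pderiv μ p) + (-eps μ) • (X μ.swap * pderiv ν p) := by
  simp only [actOp, LinearMap.add_apply, LinearMap.comp_apply, mulOp_apply, flat_mulvec,
    contract_sharp_flat, smul_mul_assoc]


noncomputable def Gterm (n : ℕ) (μ ν : SymplIdx n) (p : MvPolynomial (SymplIdx n) ℂ) :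
    MvPolynomial (SymplIdx n) ℂ :=
  (-(eps ν * eps μ)) • (X ν.swap * (pderiv μ (X ν) * pderiv μ.swap p))
  + (-(eps ν * eps μ)) • (X ν.swap * (X ν * pderiv μ (pderiv μ.swap p)))
  + (-(eps ν * eps ν)) • (X ν.swap * pderiv ν.swap p)
  + (-(eps ν * eps ν)) • (X ν.swap * (X μ * pderiv μ (pderiv ν.swap p)))

lemma act_act (n : ℕ) (μ ν : SymplIdx n) (p : MvPolynomial (SymplIdx n) ℂ) :
    actOp n (flatVec n μ) (flatVec n ν) (actOp n (Pi.single μ 1) (Pi.single ν 1) p)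
      = Gterm n μ ν p + Gterm n ν μ p := by
  rw [actE_apply, actF_apply, Gterm, Gterm]
  simp only [smul_eq_C_mul, map_add, pderiv_C_mul, pderiv_mul, pderiv_X_self, pderiv_C, map_neg, map_mul,
    map_one]
  ring


lemma sum_swap_reindex {n : ℕ} {M : Type*} [AddCommMonoid M] (F : SymplIdx n → M) :
    ∑ μ : SymplIdx n, F (Sum.swap μ) = ∑ μ, F μ :=
  Fintype.sum_equiv (Equiv.sumComm (Fin n) (Fin n)) _ _ (fun _ => rfl)

lemma zero_quad (n : ℕ) :
    ∑ ν : SymplIdx n, eps ν • (X (Sum.swap ν) * X ν : MvPolynomial (SymplIdx n) ℂ) = 0 := by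
  rw [Fintype.sum_sum_type, ← Finset.sum_add_distrib]
  refine Finset.sum_eq_zero fun i _ => ?_
  show eps (Sum.inl i) • (X (Sum.inl i).swap * X (Sum.inl i)) +
    eps (Sum.inr i) • (X (Sum.inr i).swap * X (Sum.inr i)) = 0
  simp only [eps, Sum.elim_inl, Sum.elim_inr, Sum.swap, neg_smul, one_smul]
  rw [mul_comm]
  ring

lemma euler_swap {n : ℕ} {l : ℕ} {p : MvPolynomial (SymplIdx n) ℂ} (hp : p.IsHomogeneous l) :
    ∑ ν : SymplIdx n, (X (Sum.swap ν) * pderiv (Sum.swap ν) p : MvPolynomial (SymplIdx n) ℂ) = (l : ℂ) • p := by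
  rw [sum_swap_reindex (fun ν => X ν * pderiv ν p), euler hp]


set_option maxHeartbeats 1000000 in
/-- Casimir eigenvalue of `sp(n)` in `σ`-normalization on `Sym^l E`:
`q(R^E)` acts on `Sym^l E` as multiplication by `-l(n + l/2)`. -/
theorem casimir_eigenvalue_on_symmetric_power
    (n : ℕ) (hn : 2 ≤ n) (l : ℕ) (p : MvPolynomial (SymplIdx n) ℂ)
    (hp : p.IsHomogeneous l) :
    qRE n p = (-(l : ℂ) * ((n : ℂ) + (l : ℂ) / 2)) • p := by
  have happ : qRE n p = (1 / 4 : ℂ) • ∑ μ : SymplIdx n, ∑ ν : SymplIdx n,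
      actOp n (flatVec n μ) (flatVec n ν) (actOp n (Pi.single μ 1) (Pi.single ν 1) p) := by
    simp [qRE, LinearMap.sum_apply]
  rw [happ]
  have hGG : ∑ μ : SymplIdx n, ∑ ν : SymplIdx n,
      actOp n (flatVec n μ) (flatVec n ν) (actOp n (Pi.single μ 1) (Pi.single ν 1) p)
      = (∑ μ : SymplIdx n, ∑ ν : SymplIdx n, Gterm n μ ν p) + (∑ μ : SymplIdx n, ∑ ν : SymplIdx n, Gterm n μ ν p) := by
    simp only [act_act, Finset.sum_add_distrib]
    exact congrArg (_ + ·) Finset.sum_comm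
  have hS1 : ∑ μ : SymplIdx n, ∑ ν : SymplIdx n,
      (-(eps ν * eps μ)) • (X (Sum.swap ν) * (pderiv μ (X ν) * pderiv (Sum.swap μ) p)) = (-(l:ℂ)) • p := by
    have hinner : ∀ μ : SymplIdx n, ∑ ν : SymplIdx n,
        (-(eps ν * eps μ)) • (X (Sum.swap ν) * (pderiv μ (X ν) * pderiv (Sum.swap μ) p))
        = (-1 : ℂ) • (X (Sum.swap μ) * pderiv (Sum.swap μ) p) := by
      intro μ
      rw [Finset.sum_congr rfl (fun ν _ => ?_),
        Finset.sum_ite_eq' Finset.univ μ (fun ν => (-1:ℂ) • (X (Sum.swap μ) * pderiv (Sum.swap μ) p))]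
      · simp
      · by_cases h : ν = μ
        · subst h; rw [pderiv_X_self, if_pos rfl, one_mul, neg_smul, neg_smul, eps_sq, one_smul]
        · rw [pderiv_X_of_ne h, if_neg h]; simp
    rw [Finset.sum_congr rfl (fun μ _ => hinner μ), ← Finset.smul_sum, euler_swap hp,
      smul_smul]
    norm_num
  have hS2 : ∑ μ : SymplIdx n, ∑ ν : SymplIdx n,
      (-(eps ν * eps μ)) • (X (Sum.swap ν) * (X ν * pderiv μ (pderiv (Sum.swap μ) p))) = 0 := by
    refine Finset.sum_eq_zero fun μ _ => ?_
    have h2 : ∀ ν : SymplIdx n, (-(eps ν * eps μ)) • (X (Sum.swap ν) * (X ν * pderiv μ (pderiv (Sum.swap μ) p)))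
        = (eps ν • (X (Sum.swap ν) * X ν)) * ((-(eps μ)) • pderiv μ (pderiv (Sum.swap μ) p)) := by
      intro ν
      simp only [smul_eq_C_mul, map_neg, map_mul]
      ring
    rw [Finset.sum_congr rfl (fun ν _ => h2 ν), ← Finset.sum_mul, zero_quad, zero_mul]
  have hS3 : ∑ μ : SymplIdx n, ∑ ν, (-(eps ν * eps ν)) • (X (Sum.swap ν) * (pderiv (Sum.swap ν) p) :
        MvPolynomial (SymplIdx n) ℂ) = ((-(2 * n : ℂ)) * l) • p := by
    have hinner : ∑ ν, (-(eps ν * eps ν)) • (X (Sum.swap ν) * (pderiv (Sum.swap ν) p) :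
        MvPolynomial (SymplIdx n) ℂ) = (-(l:ℂ)) • p := by
      rw [Finset.sum_congr rfl (fun ν _ => by rw [eps_sq, neg_smul, one_smul]),
        Finset.sum_neg_distrib, euler_swap hp, neg_smul]
    rw [Finset.sum_congr rfl (fun μ _ => hinner), Finset.sum_const, Finset.card_univ,
      Fintype.card_sum, Fintype.card_fin, ← Nat.cast_smul_eq_nsmul ℂ, smul_smul]
    congr 1
    push_cast
    ring
  have hS4 : ∑ μ : SymplIdx n, ∑ ν : SymplIdx n,
      (-(eps ν * eps ν)) • (X (Sum.swap ν) * (X μ * pderiv μ (pderiv (Sum.swap ν) p))) =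
      (-(((l:ℂ)^2 - l))) • p := by
    have h1 : ∀ (μ ν : SymplIdx n),
        (-(eps ν * eps ν)) • (X (Sum.swap ν) * (X μ * pderiv μ (pderiv (Sum.swap ν) p)))
        = (-1 : ℂ) • (X μ * (X (Sum.swap ν) * pderiv μ (pderiv (Sum.swap ν) p))) := by
      intro μ ν
      rw [eps_sq]
      simp only [smul_eq_C_mul, map_neg, map_one]
      ring
    calc ∑ μ : SymplIdx n, ∑ ν : SymplIdx n, (-(eps ν * eps ν)) • (X (Sum.swap ν) * (X μ * pderiv μ (pderiv (Sum.swap ν) p)))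
        = ∑ μ : SymplIdx n, ∑ ν : SymplIdx n, (-1 : ℂ) • (X μ * (X (Sum.swap ν) * pderiv μ (pderiv (Sum.swap ν) p))) :=
          Finset.sum_congr rfl fun μ _ => Finset.sum_congr rfl fun ν _ => h1 μ ν
      _ = (-1 : ℂ) • ∑ μ : SymplIdx n, ∑ ν : SymplIdx n, X μ * (X (Sum.swap ν) * pderiv μ (pderiv (Sum.swap ν) p)) := by
          simp only [Finset.smul_sum]
      _ = (-1 : ℂ) • ∑ μ : SymplIdx n, ∑ ν : SymplIdx n, X μ * (X ν * pderiv μ (pderiv ν p)) := by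
          exact congrArg ((-1 : ℂ) • ·) <| Finset.sum_congr rfl fun μ _ =>
            sum_swap_reindex (fun ν => X μ * (X ν * pderiv μ (pderiv ν p)))
      _ = (-(((l:ℂ)^2 - l))) • p := by rw [double_euler hp, smul_smul]; norm_num
  have hG : ∑ μ : SymplIdx n, ∑ ν : SymplIdx n, Gterm n μ ν p
      = (-(l:ℂ)) • p + 0 + ((-(2 * n : ℂ)) * l) • p + (-(((l:ℂ)^2 - l))) • p := by
    rw [← hS1, ← hS2, ← hS3, ← hS4]
    simp only [Gterm, Finset.sum_add_distrib]
  rw [hGG, hG]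
  match_scalars
  ring
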